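/- arXiv:1112.6201 — 2 statements merged into one kernel-verified Lean document; each statement's English description precedes it below -/
import Mathlib

section
/- Let R be a Noetherian local ring. If R satisfies the condition (GARC), then R satisfies the condition (SAC). -/
/-!
Common definitions: Ext and Tor modules, depth, (maximal) Cohen-Macaulayness,
finite injective dimension, canonical modules, totally reflexive modules,
local freeness on the punctured spectrum, injective hulls of the residue field.
-/

open CategoryTheory TensorProduct IsLocalRing

universe u

/-- The `i`-th Ext module `Ext_R^i(M, N)`, as an object of `ModuleCat R`. -/
noncomputable abbrev extM (R : Type u) [CommRing R] (i : ℕ)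
    (M N : Type u) [AddCommGroup M] [Module R M] [AddCommGroup N] [Module R N] :
    ModuleCat.{u} R :=
  ((Ext R (ModuleCat.{u} R) i).obj (Opposite.op (ModuleCat.of R M))).obj (ModuleCat.of R N)

/-- The `i`-th Tor module `Tor^R_i(M, N)`, as an object of `ModuleCat R`. -/
noncomputable abbrev torM (R : Type u) [CommRing R] (i : ℕ)
    (M N : Type u) [AddCommGroup M] [Module R M] [AddCommGroup N] [Module R N] :
    ModuleCat.{u} R :=
  ((Tor (ModuleCat.{u} R) i).obj (ModuleCat.of R M)).obj (ModuleCat.of R N)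

/-- The depth of a module over a local ring: the least `i` with `Ext^i(k, M) ≠ 0`
(`∞` if no such `i` exists). -/
noncomputable def moduleDepth (R : Type u) [CommRing R] [IsLocalRing R]
    (M : Type u) [AddCommGroup M] [Module R M] : ℕ∞ :=
  sInf ((fun i : ℕ => (i : ℕ∞)) '' {i : ℕ | ¬ Subsingleton (extM R i (ResidueField R) M)})

/-- A finitely generated module of depth equal to the Krull dimension of the ring. -/
def IsMaximalCohenMacaulay (R : Type u) [CommRing R] [IsLocalRing R]
    (M : Type u) [AddCommGroup M] [Module R M] : Prop :=
  Module.Finite R M ∧ (moduleDepth R M : WithBot ℕ∞) = ringKrullDim R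

/-- A module has finite injective dimension iff `Ext^i(R/I, M)` vanishes
for all ideals `I` and all `i` beyond some bound (Baer's criterion). -/
def HasFiniteInjectiveDimension (R : Type u) [CommRing R]
    (M : Type u) [AddCommGroup M] [Module R M] : Prop :=
  ∃ n : ℕ, ∀ I : Ideal R, ∀ i > n, Subsingleton (extM R i (R ⧸ I) M)

/-- A canonical module of a Cohen-Macaulay local ring of dimension `d`:
a maximal Cohen-Macaulay module of finite injective dimension with
`Ext^d(k, ω)` a one-dimensional `k`-vector space (i.e. isomorphic to `k`). -/
def IsCanonicalModule (R : Type u) [CommRing R] [IsLocalRing R]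
    (ω : Type u) [AddCommGroup ω] [Module R ω] : Prop :=
  IsMaximalCohenMacaulay R ω ∧ HasFiniteInjectiveDimension R ω ∧
    ∀ d : ℕ, ringKrullDim R = (d : WithBot ℕ∞) →
      Nonempty ((extM R d (ResidueField R) ω) ≃ₗ[R] ResidueField R)

/-- A totally reflexive module: finitely generated, reflexive, with
`Ext^i(X, R) = 0 = Ext^i(X*, R)` for all `i > 0`. -/
def IsTotallyReflexive (R : Type u) [CommRing R]
    (X : Type u) [AddCommGroup X] [Module R X] : Prop :=
  Module.Finite R X ∧ Module.IsReflexive R X ∧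
    ∀ i > 0, Subsingleton (extM R i X R) ∧ Subsingleton (extM R i (X →ₗ[R] R) R)

/-- `M` is locally free on the punctured spectrum of the local ring `R`. -/
def IsLocallyFreeOnPuncturedSpectrum (R : Type u) [CommRing R] [IsLocalRing R]
    (M : Type u) [AddCommGroup M] [Module R M] : Prop :=
  ∀ (p : Ideal R) [p.IsPrime], p ≠ maximalIdeal R →
    Module.Free (Localization.AtPrime p) (LocalizedModule p.primeCompl M)

/-- `E` is an injective hull of the residue field: `E` is injective and contains
a copy of `k` as an essential submodule. -/
def IsInjectiveHullOfResidueField (R : Type u) [CommRing R] [IsLocalRing R]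
    (E : Type u) [AddCommGroup E] [Module R E] : Prop :=
  Module.Injective R E ∧
    ∃ ι : ResidueField R →ₗ[R] E, Function.Injective ι ∧
      ∀ N : Submodule R E, N ≠ ⊥ → N ⊓ LinearMap.range ι ≠ ⊥

/-- The projective dimension of `M` is at most `n`:
`Ext^i(M, N)` vanishes for all modules `N` and all `i > n`. -/
def ProjDimLE (R : Type u) [CommRing R]
    (M : Type u) [AddCommGroup M] [Module R M] (n : ℕ) : Prop :=
  ∀ (N : Type u) [AddCommGroup N] [Module R N], ∀ i > n, Subsingleton (extM R i M N)

/-- `M` has constant rank `r`: the localization of `M` at every associated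
prime of `R` is free of rank `r`. -/
def HasConstantRank (R : Type u) [CommRing R]
    (M : Type u) [AddCommGroup M] [Module R M] : Prop :=
  ∃ r : ℕ, ∀ (p : Ideal R) [p.IsPrime], p ∈ associatedPrimes R R →
    Nonempty ((LocalizedModule p.primeCompl M) ≃ₗ[Localization p.primeCompl]
      (Fin r → Localization p.primeCompl))

/-- The Auslander-Reiten condition: every finitely generated module `M` with
`Ext^{>0}(M, M ⊕ R) = 0` is free. -/
def SatisfiesARC (R : Type u) [CommRing R] : Prop :=
  ∀ (M : Type u) [AddCommGroup M] [Module R M], Module.Finite R M →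
    (∀ i > 0, Subsingleton (extM R i M (M × R))) → Module.Free R M

/-- The symmetric Auslander condition: for every finitely generated module `M`,
if `Ext^{>0}(M, R) = 0` and `Ext^{≫0}(M, M) = 0`, then `Ext^{>0}(M, M) = 0`. -/
def SatisfiesSAC (R : Type u) [CommRing R] : Prop :=
  ∀ (M : Type u) [AddCommGroup M] [Module R M], Module.Finite R M →
    (∀ i > 0, Subsingleton (extM R i M R)) →
    (∃ n : ℕ, ∀ i > n, Subsingleton (extM R i M M)) →
    ∀ i > 0, Subsingleton (extM R i M M)

/-- The symmetric Auslander condition for modules of constant rank. -/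
def SatisfiesSACC (R : Type u) [CommRing R] : Prop :=
  ∀ (M : Type u) [AddCommGroup M] [Module R M], Module.Finite R M →
    HasConstantRank R M →
    (∀ i > 0, Subsingleton (extM R i M R)) →
    (∃ n : ℕ, ∀ i > n, Subsingleton (extM R i M M)) →
    ∀ i > 0, Subsingleton (extM R i M M)

/-- The generalized Auslander-Reiten condition: every finitely generated module
`M` with `Ext^{>n}(M, M ⊕ R) = 0` has projective dimension at most `n`. -/
def SatisfiesGARC (R : Type u) [CommRing R] : Prop :=
  ∀ (M : Type u) [AddCommGroup M] [Module R M], Module.Finite R M →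
    ∀ n : ℕ, (∀ i > n, Subsingleton (extM R i M (M × R))) → ProjDimLE R M n

/-- The condition (GARC'): every finitely generated module `M` with
`Ext^{≫0}(M, M ⊕ R) = 0` has finite projective dimension. -/
def SatisfiesGARC' (R : Type u) [CommRing R] : Prop :=
  ∀ (M : Type u) [AddCommGroup M] [Module R M], Module.Finite R M →
    (∃ n : ℕ, ∀ i > n, Subsingleton (extM R i M (M × R))) →
    ∃ n : ℕ, ProjDimLE R M n

/-- The Huneke-Wiegand condition: every finitely generated torsionfree module
`M` such that `M ⊗ M*` is reflexive is free. -/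
def SatisfiesHWC (R : Type u) [CommRing R] : Prop :=
  ∀ (M : Type u) [AddCommGroup M] [Module R M], Module.Finite R M →
    (∀ r ∈ nonZeroDivisors R, Function.Injective (fun m : M => r • m)) →
    Module.IsReflexive R (M ⊗[R] (M →ₗ[R] R)) → Module.Free R M

section SacGarcAuxSection

open CategoryTheory Limits HomologicalComplex

variable {R : Type u} [CommRing R]

namespace SacGarcAux

noncomputable def homCplxMap {Z : ModuleCat.{u} R} (P : ProjectiveResolution Z)
    {Y Y' : ModuleCat.{u} R} (g : Y ⟶ Y') :
    P.complex.linearYonedaObj R Y ⟶ P.complex.linearYonedaObj R Y' where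
  f i := ((linearYoneda R (ModuleCat.{u} R)).map g).app (Opposite.op (P.complex.X i))
  comm' i j _ := (((linearYoneda R (ModuleCat.{u} R)).map g).naturality _)

@[simp] lemma homCplxMap_apply {Z : ModuleCat.{u} R} (P : ProjectiveResolution Z)
    {Y Y' : ModuleCat.{u} R} (g : Y ⟶ Y') (i : ℕ)
    (φ : (P.complex.linearYonedaObj R Y).X i) :
    ((homCplxMap P g).f i) φ = (show P.complex.X i ⟶ Y from φ) ≫ g := rfl

noncomputable def homCplxSC {Z : ModuleCat.{u} R} (P : ProjectiveResolution Z)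
    (S : ShortComplex (ModuleCat.{u} R)) :
    ShortComplex (CochainComplex (ModuleCat.{u} R) ℕ) :=
  ShortComplex.mk (homCplxMap P S.f) (homCplxMap P S.g) (by
    ext i φ
    show ((show P.complex.X i ⟶ S.X₁ from φ) ≫ S.f) ≫ S.g = 0
    rw [Category.assoc, S.zero, Limits.comp_zero])

lemma homCplxSC_shortExact {Z : ModuleCat.{u} R} (P : ProjectiveResolution Z)
    (S : ShortComplex (ModuleCat.{u} R)) (hS : S.ShortExact) :
    (homCplxSC P S).ShortExact := by
  apply HomologicalComplex.shortExact_of_degreewise_shortExact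
  intro i
  have := hS.mono_f
  have := hS.epi_g
  refine { exact := ?_, mono_f := ?_, epi_g := ?_ }
  · rw [ShortComplex.moduleCat_exact_iff]
    intro φ hφ
    have hφ' : (show P.complex.X i ⟶ S.X₂ from φ) ≫ S.g = 0 := hφ
    exact ⟨hS.exact.fIsKernel.lift (KernelFork.ofι _ hφ'),
      Fork.IsLimit.lift_ι hS.exact.fIsKernel⟩
  · rw [ModuleCat.mono_iff_injective]
    intro a b hab
    have : (show P.complex.X i ⟶ S.X₁ from a) ≫ S.f
        = (show P.complex.X i ⟶ S.X₁ from b) ≫ S.f := hab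
    exact (cancel_mono S.f).1 this
  · rw [ModuleCat.epi_iff_surjective]
    intro ψ
    obtain ⟨φ, hφ⟩ := Projective.factors (show P.complex.X i ⟶ S.X₃ from ψ) S.g
    exact ⟨φ, hφ⟩

lemma subsingleton_of_iso {A B : ModuleCat.{u} R} (e : A ≅ B) (h : Subsingleton A) :
    Subsingleton B := by
  have e' : (A : Type u) ≃ (B : Type u) :=
    ((CategoryTheory.forget (ModuleCat.{u} R)).mapIso e).toEquiv
  exact e'.symm.subsingleton

lemma subsingleton_X₂ (S : ShortComplex (ModuleCat.{u} R)) (hS : S.Exact)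
    (h1 : Subsingleton S.X₁) (h3 : Subsingleton S.X₃) : Subsingleton S.X₂ := by
  rw [ShortComplex.moduleCat_exact_iff] at hS
  refine ⟨fun a b => ?_⟩
  obtain ⟨x, hx⟩ := hS (a - b) (Subsingleton.elim _ _)
  have : x = 0 := Subsingleton.elim _ _
  rw [this, map_zero] at hx
  exact sub_eq_zero.1 hx.symm

/-- Middle vanishing in the LES. -/
lemma ext_subsingleton_mid (Z : ModuleCat.{u} R) (S : ShortComplex (ModuleCat.{u} R))
    (hS : S.ShortExact) (i : ℕ)
    (h1 : Subsingleton (((Ext R (ModuleCat.{u} R) i).obj (Opposite.op Z)).obj S.X₁))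
    (h3 : Subsingleton (((Ext R (ModuleCat.{u} R) i).obj (Opposite.op Z)).obj S.X₃)) :
    Subsingleton (((Ext R (ModuleCat.{u} R) i).obj (Opposite.op Z)).obj S.X₂) := by
  have P : ProjectiveResolution Z := (HasProjectiveResolution.out (Z := Z)).some
  have hSE := homCplxSC_shortExact P S hS
  have hex := hSE.homology_exact₂ i
  refine subsingleton_of_iso (P.isoExt i S.X₂).symm ?_
  exact subsingleton_X₂ _ hex
    (subsingleton_of_iso (P.isoExt i S.X₁) h1)
    (subsingleton_of_iso (P.isoExt i S.X₃) h3)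

/-- Right vanishing in the LES. -/
lemma ext_subsingleton_right (Z : ModuleCat.{u} R) (S : ShortComplex (ModuleCat.{u} R))
    (hS : S.ShortExact) (i : ℕ)
    (h2 : Subsingleton (((Ext R (ModuleCat.{u} R) i).obj (Opposite.op Z)).obj S.X₂))
    (h1 : Subsingleton (((Ext R (ModuleCat.{u} R) (i + 1)).obj (Opposite.op Z)).obj S.X₁)) :
    Subsingleton (((Ext R (ModuleCat.{u} R) i).obj (Opposite.op Z)).obj S.X₃) := by
  have P : ProjectiveResolution Z := (HasProjectiveResolution.out (Z := Z)).some
  have hSE := homCplxSC_shortExact P S hS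
  have hex := hSE.homology_exact₃ i (i + 1) (by simp)
  refine subsingleton_of_iso (P.isoExt i S.X₃).symm ?_
  exact subsingleton_X₂ _ hex
    (subsingleton_of_iso (P.isoExt i S.X₂) h2)
    (subsingleton_of_iso (P.isoExt (i + 1) S.X₁) h1)

lemma ext_subsingleton_of_subsingleton (Z Y : ModuleCat.{u} R) [Subsingleton Y] (i : ℕ) :
    Subsingleton (((Ext R (ModuleCat.{u} R) i).obj (Opposite.op Z)).obj Y) := by
  have P : ProjectiveResolution Z := (HasProjectiveResolution.out (Z := Z)).some
  refine subsingleton_of_iso (P.isoExt i Y).symm ?_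
  have hsub : Subsingleton ((P.complex.linearYonedaObj R Y).X i) := by
    refine ⟨fun a b => ?_⟩
    apply ModuleCat.hom_ext
    apply LinearMap.ext
    intro x
    exact Subsingleton.elim _ _
  have hz : IsZero ((P.complex.linearYonedaObj R Y).X i) :=
    ModuleCat.isZero_of_subsingleton _
  have hzh : IsZero ((P.complex.linearYonedaObj R Y).homology i) :=
    (HomologicalComplex.exactAt_iff_isZero_homology _ _).1
      (ShortComplex.exact_of_isZero_X₂ _ hz)
  have : Subsingleton (ModuleCat.of R PUnit) := by infer_instance
  exact subsingleton_of_iso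
    (IsZero.iso (ModuleCat.isZero_of_subsingleton (ModuleCat.of R PUnit)) hzh) this

/-- The short complex `R → (Fin (c+1) → R) → (Fin c → R)`. -/
noncomputable def sesPi (c : ℕ) : ShortComplex (ModuleCat.{u} R) :=
  ShortComplex.mk
    (ModuleCat.ofHom (LinearMap.single R (fun _ : Fin (c + 1) => R) (Fin.last c)))
    (ModuleCat.ofHom (LinearMap.funLeft R R (Fin.castSucc : Fin c → Fin (c + 1))))
    (by
      apply ModuleCat.hom_ext
      apply LinearMap.ext
      intro r
      funext j
      show Pi.single (M := fun _ : Fin (c+1) => R) (Fin.last c) r (Fin.castSucc j) = (0 : R)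
      exact Pi.single_eq_of_ne (M := fun _ : Fin (c+1) => R) (Fin.castSucc_lt_last j).ne r)

lemma sesPi_shortExact (c : ℕ) : (sesPi (R := R) c).ShortExact := by
  refine { exact := ?_, mono_f := ?_, epi_g := ?_ }
  · rw [ShortComplex.moduleCat_exact_iff]
    intro φ hφ
    have hφ' : (fun j' : Fin c => φ (Fin.castSucc j')) = (0 : Fin c → R) := hφ
    refine ⟨φ (Fin.last c), ?_⟩
    show Pi.single (M := fun _ : Fin (c+1) => R) (Fin.last c) (φ (Fin.last c)) = φ
    funext j
    refine Fin.lastCases ?_ (fun j' => ?_) j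
    · exact Pi.single_eq_same _ _
    · have h0 : φ (Fin.castSucc j') = 0 := congrFun hφ' j'
      rw [Pi.single_eq_of_ne (Fin.castSucc_lt_last j').ne, h0]
  · rw [ModuleCat.mono_iff_injective]
    intro a b hab
    have hab' : Pi.single (M := fun _ : Fin (c+1) => R) (Fin.last c) a = Pi.single (M := fun _ : Fin (c+1) => R) (Fin.last c) b := hab
    exact (Pi.single_eq_same (M := fun _ : Fin (c+1) => R) (Fin.last c) a).symm.trans
      ((congrFun hab' (Fin.last c)).trans (Pi.single_eq_same (M := fun _ : Fin (c+1) => R) (Fin.last c) b))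
  · rw [ModuleCat.epi_iff_surjective]
    exact LinearMap.funLeft_surjective_of_injective R R _ (Fin.castSucc_injective c)

lemma ext_pi (Z : ModuleCat.{u} R) (i : ℕ)
    (hR : Subsingleton (((Ext R (ModuleCat.{u} R) i).obj (Opposite.op Z)).obj
      (ModuleCat.of R R))) (c : ℕ) :
    Subsingleton (((Ext R (ModuleCat.{u} R) i).obj (Opposite.op Z)).obj
      (ModuleCat.of R (Fin c → R))) := by
  induction c with
  | zero => exact ext_subsingleton_of_subsingleton Z (ModuleCat.of R (Fin 0 → R)) i
  | succ c ih =>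
    exact ext_subsingleton_mid Z (sesPi c) (sesPi_shortExact c) i hR ih

/-- The split short complex `M → M × R → R`. -/
noncomputable def sesProd (M : Type u) [AddCommGroup M] [Module R M] :
    ShortComplex (ModuleCat.{u} R) :=
  ShortComplex.mk
    (ModuleCat.ofHom (LinearMap.inl R M R))
    (ModuleCat.ofHom (LinearMap.snd R M R))
    (by apply ModuleCat.hom_ext; apply LinearMap.ext; intro m; rfl)

lemma sesProd_shortExact (M : Type u) [AddCommGroup M] [Module R M] :
    (sesProd (R := R) M).ShortExact := by
  refine { exact := ?_, mono_f := ?_, epi_g := ?_ }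
  · rw [ShortComplex.moduleCat_exact_iff]
    intro x hx
    have hx2 : x.2 = 0 := hx
    refine ⟨x.1, ?_⟩
    show ((x.1, (0 : R)) : M × R) = x
    rw [← hx2]
    exact Prod.mk.eta
  · rw [ModuleCat.mono_iff_injective]
    intro a b hab
    have hab' : ((a, (0 : R)) : M × R) = (b, 0) := hab
    exact congrArg Prod.fst hab'
  · rw [ModuleCat.epi_iff_surjective]
    intro r
    exact ⟨(0, r), rfl⟩

end SacGarcAux

end SacGarcAuxSection

section SacGarcMain

open CategoryTheory in
/-- A Noetherian local ring satisfying (GARC) satisfies (SAC). -/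
theorem sac_of_garc
    (R : Type u) [CommRing R] [IsNoetherianRing R] [IsLocalRing R]
    (h : SatisfiesGARC R) :
    SatisfiesSAC R := by
  intro M _ _ hfin hR hex
  obtain ⟨n, hn⟩ := hex
  suffices H : ∀ m : ℕ, (∀ j, j > m → Subsingleton (extM R j M M)) →
      ∀ j, j > 0 → Subsingleton (extM R j M M) from H n (fun j hj => hn j hj)
  intro m
  induction m with
  | zero => exact fun hQ => hQ
  | succ m ih =>
    intro hQ
    refine ih ?_
    intro j hj
    by_cases hj' : j > m + 1
    · exact hQ j hj'
    have hjm : j = m + 1 := by omega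
    subst hjm
    have hprod : ∀ k, k > m + 1 → Subsingleton (extM R k M (M × R)) := fun k hk =>
      SacGarcAux.ext_subsingleton_mid (ModuleCat.of R M) (SacGarcAux.sesProd M)
        (SacGarcAux.sesProd_shortExact M) k (hQ k hk) (hR k (by omega))
    have pd : ProjDimLE R M (m + 1) := h M hfin (m + 1) hprod
    obtain ⟨c, f, hf⟩ := Module.Finite.exists_fin' R M
    let S : CategoryTheory.ShortComplex (ModuleCat.{u} R) :=
      CategoryTheory.ShortComplex.mk
        (ModuleCat.ofHom (LinearMap.ker f).subtype) (ModuleCat.ofHom f)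
        (by
          apply ModuleCat.hom_ext
          apply LinearMap.ext
          intro x
          show f x.1 = 0
          exact x.2)
    have hS : S.ShortExact := by
      refine { exact := ?_, mono_f := ?_, epi_g := ?_ }
      · rw [CategoryTheory.ShortComplex.moduleCat_exact_iff]
        intro x hx
        exact ⟨⟨x, hx⟩, rfl⟩
      · rw [ModuleCat.mono_iff_injective]
        exact Subtype.val_injective
      · rw [ModuleCat.epi_iff_surjective]
        exact hf
    exact SacGarcAux.ext_subsingleton_right (ModuleCat.of R M) S hS (m + 1)
      (SacGarcAux.ext_pi (ModuleCat.of R M) (m + 1) (hR (m + 1) (by omega)) c)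
      (pd (LinearMap.ker f) (m + 2) (by omega))

end SacGarcMain
end

section
/- Let R be a Noetherian local ring. If R satisfies the condition (SAC), then R satisfies the condition (GARC). -/
/-!
Common definitions: Ext and Tor modules, depth, (maximal) Cohen-Macaulayness,
finite injective dimension, canonical modules, totally reflexive modules,
local freeness on the punctured spectrum, injective hulls of the residue field.
-/

open CategoryTheory TensorProduct IsLocalRing

universe u

section GarcSacAux
open CategoryTheory Limits

section Bridge

variable {R : Type u} [CommRing R]

lemma subsingleton_iff_isZero (N : ModuleCat.{u} R) : Subsingleton N ↔ IsZero N := by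
  constructor
  · intro h; exact ModuleCat.isZero_of_subsingleton N
  · intro h
    refine ⟨fun a b => ?_⟩
    have h1 : (𝟙 N : N ⟶ N) = 0 := by
      apply h.eq_of_src
    have := congrFun (congrArg (fun (f : N ⟶ N) => (f : N → N)) h1)
    simpa using (this a).trans (this b).symm

/-- helper to apply a LinearMap equation pointwise -/
theorem lapp {M N : Type u} [AddCommGroup M] [Module R M] [AddCommGroup N] [Module R N]
    {f g : M →ₗ[R] N} (h : f = g) (x : M) : f x = g x := by rw [h]

instance homCoeLin {X Y : ModuleCat.{u} R} : CoeOut (X ⟶ Y) (X →ₗ[R] Y) := ⟨ModuleCat.Hom.hom⟩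

structure FreeRes (R : Type u) [CommRing R] (A : Type u) [AddCommGroup A] [Module R A] where
  F : ℕ → ModuleCat.{u} R
  proj : ∀ j, Module.Projective R (F j)
  d : ∀ j, F (j + 1) ⟶ F j
  π0 : F 0 ⟶ ModuleCat.of R A
  surj : Function.Surjective π0
  dd : ∀ j, d (j + 1) ≫ d j = 0
  πd : d 0 ≫ π0 = 0
  ex0 : ∀ x : F 0, π0 x = 0 → ∃ y, d 0 y = x
  ex : ∀ j, ∀ x : F (j + 1), d j x = 0 → ∃ y, d (j + 1) y = x

namespace FreeRes

variable {A : Type u} [AddCommGroup A] [Module R A] (r : FreeRes R A)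

noncomputable def complex : ChainComplex (ModuleCat.{u} R) ℕ :=
  ChainComplex.of r.F r.d r.dd

@[simp] lemma complex_X (j : ℕ) : r.complex.X j = r.F j := rfl

@[simp] lemma complex_d (j : ℕ) : r.complex.d (j + 1) j = r.d j := by
  simp [complex]

instance (j : ℕ) : Projective (r.complex.X j) := by
  have : Module.Projective R (r.F j) := r.proj j
  exact Projective.of_iso (Iso.refl _) ((IsProjective.iff_projective _).mp this)

lemma complex_exactAt_succ (n : ℕ) : r.complex.ExactAt (n + 1) := by
  rw [HomologicalComplex.exactAt_iff' _ (n + 1 + 1) (n + 1) n (by simp) (by simp)]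
  rw [ShortComplex.moduleCat_exact_iff]
  intro x hx
  simp only [HomologicalComplex.shortComplexFunctor'_obj_X₂,
    HomologicalComplex.shortComplexFunctor'_obj_g, HomologicalComplex.shortComplexFunctor'_obj_f, complex_d] at hx ⊢
  exact r.ex n x hx

noncomputable def pr : ProjectiveResolution (ModuleCat.of R A) where
  complex := r.complex
  projective := inferInstance
  π := (ChainComplex.toSingle₀Equiv _ _).symm ⟨r.π0, by have := r.complex_d 0; rw [this]; exact r.πd⟩
  quasiIso := ⟨fun n => by
    cases n with
    | zero =>
      rw [ChainComplex.quasiIsoAt₀_iff, ShortComplex.quasiIso_iff_of_zeros']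
      · constructor
        · rw [ShortComplex.moduleCat_exact_iff]
          intro x hx
          obtain ⟨y, hy⟩ := r.ex0 x hx
          exact ⟨y, hy⟩
        · rw [ModuleCat.epi_iff_surjective]
          intro x
          obtain ⟨y, hy⟩ := r.surj x
          exact ⟨y, hy⟩
      all_goals rfl
    | succ n =>
      rw [quasiIsoAt_iff_exactAt']
      · exact r.complex_exactAt_succ n
      · apply ChainComplex.exactAt_succ_single_obj⟩

end FreeRes

end Bridge

section Bridge2
variable {R : Type u} [CommRing R]
variable {A : Type u} [AddCommGroup A] [Module R A] (r : FreeRes R A)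

theorem FreeRes.subsingleton_ext_iff (j : ℕ) (N : Type u) [AddCommGroup N] [Module R N] :
    Subsingleton (extM R (j + 1) A N) ↔
      ∀ c : (r.F (j + 1) : Type u) →ₗ[R] N,
        c.comp (r.d (j + 1) : (r.F (j + 2) : Type u) →ₗ[R] (r.F (j + 1) : Type u)) = 0 →
        ∃ e : (r.F j : Type u) →ₗ[R] N, c = e.comp (r.d j).hom := by
  rw [subsingleton_iff_isZero]
  have i1 := r.pr.isoExt (R := R) (j + 1) (ModuleCat.of R N)
  have h2 : IsZero (extM R (j + 1) A N) ↔
      IsZero ((r.complex.linearYonedaObj R (ModuleCat.of R N)).homology (j + 1)) :=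
    ⟨fun h => h.of_iso i1.symm, fun h => h.of_iso i1⟩
  rw [h2, ← HomologicalComplex.exactAt_iff_isZero_homology,
    HomologicalComplex.exactAt_iff' _ j (j + 1) (j + 2) (by simp) (by simp),
    ShortComplex.moduleCat_exact_iff]
  simp only [HomologicalComplex.shortComplexFunctor'_obj_X₂,
    HomologicalComplex.shortComplexFunctor'_obj_f, HomologicalComplex.shortComplexFunctor'_obj_g,
    ChainComplex.linearYonedaObj_d, FreeRes.complex_d]
  constructor
  · rintro h c hc
    obtain ⟨e, he⟩ := h (ModuleCat.ofHom c) (ModuleCat.hom_ext hc)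
    exact ⟨e.hom, (congrArg ModuleCat.Hom.hom he).symm⟩
  · rintro h c hc
    obtain ⟨e, he⟩ := h (ModuleCat.Hom.hom (show r.F (j + 1) ⟶ ModuleCat.of R N from c))
      (congrArg ModuleCat.Hom.hom hc)
    exact ⟨ModuleCat.ofHom e, ModuleCat.hom_ext he.symm⟩

end Bridge2

section Tower
variable (R : Type u) [CommRing R] [IsNoetherianRing R]

structure FGM where
  carrier : Type u
  [acg : AddCommGroup carrier]
  [mod : Module R carrier]
  [fin : Module.Finite R carrier]

attribute [instance] FGM.acg FGM.mod FGM.fin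

variable {R}

noncomputable def FGM.step (B : FGM R) :
    Σ (a : ℕ), { π : (Fin a → R) →ₗ[R] B.carrier // Function.Surjective π } :=
  ⟨(Module.Finite.exists_fin' R B.carrier).choose,
   (Module.Finite.exists_fin' R B.carrier).choose_spec.choose,
   (Module.Finite.exists_fin' R B.carrier).choose_spec.choose_spec⟩

noncomputable def FGM.next (B : FGM R) : FGM R :=
  ⟨↥(LinearMap.ker B.step.2.1)⟩

noncomputable def FGM.tw (B : FGM R) : ℕ → FGM R
  | 0 => B
  | (k + 1) => (B.tw k).next

end Tower

section TowerRes
variable {R : Type u} [CommRing R] [IsNoetherianRing R] (B : FGM R)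

/-- `K B k` : the `k`-th syzygy module. -/
noncomputable abbrev K (k : ℕ) : Type u := (B.tw k).carrier

noncomputable abbrev aT (k : ℕ) : ℕ := (B.tw k).step.1

/-- Free module at stage `k`. -/
noncomputable abbrev FT (k : ℕ) : Type u := Fin (aT B k) → R

noncomputable abbrev πT (k : ℕ) : FT B k →ₗ[R] K B k := (B.tw k).step.2.1

lemma πT_surj (k : ℕ) : Function.Surjective (πT B k) := (B.tw k).step.2.2

/-- `K B (k+1)` is by definition the kernel of `πT B k`. -/
lemma K_succ (k : ℕ) : K B (k + 1) = ↥(LinearMap.ker (πT B k)) := rfl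

/-- inclusion of the `k+1`-st syzygy into the `k`-th free module -/
noncomputable abbrev ιT (k : ℕ) : K B (k + 1) →ₗ[R] FT B k :=
  (LinearMap.ker (πT B k)).subtype

/-- differential -/
noncomputable abbrev DT (k : ℕ) : FT B (k + 1) →ₗ[R] FT B k :=
  (ιT B k).comp (πT B (k + 1))

lemma πT_ιT (k : ℕ) : (πT B k).comp (ιT B k) = 0 := by
  ext x; exact x.2

lemma DT_DT (k : ℕ) : (DT B k).comp (DT B (k + 1)) = 0 := by
  refine LinearMap.ext fun x => ?_
  show ιT B k ((πT B (k+1)).comp (ιT B (k+1)) ((πT B (k+2)) x)) = 0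
  rw [πT_ιT]
  simp

/-- The free resolution of the `m`-th syzygy. -/
noncomputable def towerRes (m : ℕ) : FreeRes R (K B m) where
  F j := ModuleCat.of R (FT B (m + j))
  proj j := inferInstanceAs (Module.Projective R (FT B (m + j)))
  d j := ModuleCat.ofHom (DT B (m + j))
  π0 := ModuleCat.ofHom (πT B m)
  surj := πT_surj B m
  dd j := ModuleCat.hom_ext (DT_DT B (m + j))
  πd := by
    refine ModuleCat.hom_ext (LinearMap.ext fun x => ?_)
    show (πT B m).comp (ιT B m) ((πT B (m+1)) x) = 0
    rw [πT_ιT]; rfl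
  ex0 x hx := by
    obtain ⟨y, hy⟩ := πT_surj B (m + 1) ⟨x, hx⟩
    exact ⟨y, by show ιT B m ((πT B (m+1)) y) = x; rw [hy]; rfl⟩
  ex j x hx := by
    have hx' : (πT B (m + j + 1)) x = 0 := by
      have : ιT B (m + j) ((πT B (m + j + 1)) x) = 0 := hx
      exact Subtype.ext_iff.mpr this
    obtain ⟨y, hy⟩ := πT_surj B (m + j + 2) ⟨x, hx'⟩
    exact ⟨y, by show ιT B (m+j+1) ((πT B (m+j+2)) y) = x; rw [hy]; rfl⟩

end TowerRes

section EZsec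
variable {R : Type u} [CommRing R] [IsNoetherianRing R] (B : FGM R)

/-- Concrete vanishing of `Ext^{j+1}(B, N)` in terms of the chosen resolution. -/
def EZ (j : ℕ) (N : Type u) [AddCommGroup N] [Module R N] : Prop :=
  ∀ c : FT B (j + 1) →ₗ[R] N, c.comp (DT B (j + 1)) = 0 →
    ∃ e : FT B j →ₗ[R] N, c = e.comp (DT B j)

theorem ext_syz_iff (m j : ℕ) (N : Type u) [AddCommGroup N] [Module R N] :
    Subsingleton (extM R (j + 1) (K B m) N) ↔ EZ B (m + j) N := by
  exact (towerRes B m).subsingleton_ext_iff j N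

variable {B}

theorem EZ.fst {j : ℕ} {N₁ N₂ : Type u} [AddCommGroup N₁] [Module R N₁]
    [AddCommGroup N₂] [Module R N₂] (h : EZ B j (N₁ × N₂)) : EZ B j N₁ := by
  intro c hc
  obtain ⟨e, he⟩ := h ((LinearMap.inl R N₁ N₂).comp c)
    (by rw [LinearMap.comp_assoc, hc, LinearMap.comp_zero])
  refine ⟨(LinearMap.fst R N₁ N₂).comp e, ?_⟩
  refine LinearMap.ext fun x => ?_
  have := congrFun (congrArg (fun (f : FT B (j+1) →ₗ[R] N₁ × N₂) => (f : FT B (j+1) → N₁ × N₂)) he) x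
  simpa using congrArg Prod.fst this

theorem EZ.snd {j : ℕ} {N₁ N₂ : Type u} [AddCommGroup N₁] [Module R N₁]
    [AddCommGroup N₂] [Module R N₂] (h : EZ B j (N₁ × N₂)) : EZ B j N₂ := by
  intro c hc
  obtain ⟨e, he⟩ := h ((LinearMap.inr R N₁ N₂).comp c)
    (by rw [LinearMap.comp_assoc, hc, LinearMap.comp_zero])
  refine ⟨(LinearMap.snd R N₁ N₂).comp e, ?_⟩
  refine LinearMap.ext fun x => ?_
  have := congrFun (congrArg (fun (f : FT B (j+1) →ₗ[R] N₁ × N₂) => (f : FT B (j+1) → N₁ × N₂)) he) x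
  simpa using congrArg Prod.snd this

theorem EZ.prod {j : ℕ} {N₁ N₂ : Type u} [AddCommGroup N₁] [Module R N₁]
    [AddCommGroup N₂] [Module R N₂] (h1 : EZ B j N₁) (h2 : EZ B j N₂) :
    EZ B j (N₁ × N₂) := by
  intro c hc
  obtain ⟨e₁, he₁⟩ := h1 ((LinearMap.fst R N₁ N₂).comp c)
    (by rw [LinearMap.comp_assoc, hc, LinearMap.comp_zero])
  obtain ⟨e₂, he₂⟩ := h2 ((LinearMap.snd R N₁ N₂).comp c)
    (by rw [LinearMap.comp_assoc, hc, LinearMap.comp_zero])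
  refine ⟨e₁.prod e₂, LinearMap.ext fun x => ?_⟩
  have h₁ := congrFun (congrArg (fun (f : FT B (j+1) →ₗ[R] N₁) => (f : FT B (j+1) → N₁)) he₁) x
  have h₂ := congrFun (congrArg (fun (f : FT B (j+1) →ₗ[R] N₂) => (f : FT B (j+1) → N₂)) he₂) x
  exact Prod.ext h₁ h₂

theorem EZ.pi {j : ℕ} {b : ℕ} {N : Fin b → Type u} [∀ i, AddCommGroup (N i)]
    [∀ i, Module R (N i)] (h : ∀ i, EZ B j (N i)) : EZ B j (∀ i, N i) := by
  intro c hc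
  have key : ∀ i, ∃ e : FT B j →ₗ[R] N i,
      (LinearMap.proj i).comp c = e.comp (DT B j) := fun i =>
    h i ((LinearMap.proj i).comp c) (by rw [LinearMap.comp_assoc, hc, LinearMap.comp_zero])
  choose e he using key
  refine ⟨LinearMap.pi e, LinearMap.ext fun x => funext fun i => ?_⟩
  exact congrFun (congrArg (fun (f : FT B (j+1) →ₗ[R] N i) => (f : FT B (j+1) → N i)) (he i)) x

/-- The main dimension-shifting chase for syzygies. -/
theorem EZ_K_succ {k j : ℕ} (h1 : EZ B (j + 1) (FT B k)) (h2 : EZ B j (K B k)) :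
    EZ B (j + 1) (K B (k + 1)) := by
  intro c hc
  obtain ⟨e, he⟩ := h1 ((ιT B k).comp c) (by rw [LinearMap.comp_assoc, hc, LinearMap.comp_zero])
  obtain ⟨f, hf⟩ := h2 ((πT B k).comp e) (by
    rw [LinearMap.comp_assoc, ← he, ← LinearMap.comp_assoc, πT_ιT, LinearMap.zero_comp])
  obtain ⟨g, hg⟩ := Module.projective_lifting_property (πT B k) f (πT_surj B k)
  have hmem : ∀ x, (e - g.comp (DT B j)) x ∈ LinearMap.ker (πT B k) := by
    intro x
    have h1' : (πT B k) (e x) = f ((DT B j) x) :=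
      congrFun (congrArg (fun (φ : FT B (j+1) →ₗ[R] K B k) => (φ : FT B (j+1) → K B k)) hf) x
    have h2' : (πT B k) (g ((DT B j) x)) = f ((DT B j) x) :=
      congrFun (congrArg (fun (φ : FT B j →ₗ[R] K B k) => (φ : FT B j → K B k)) hg) ((DT B j) x)
    refine LinearMap.mem_ker.mpr ?_
    rw [LinearMap.sub_apply, map_sub, LinearMap.comp_apply, h1', h2', sub_self]
  refine ⟨LinearMap.codRestrict (LinearMap.ker (πT B k)) (e - g.comp (DT B j)) hmem, ?_⟩
  refine LinearMap.ext fun x => Subtype.ext ?_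
  have hdd : (DT B j) ((DT B (j + 1)) x) = 0 :=
    congrFun (congrArg (fun (φ : FT B (j+2) →ₗ[R] FT B j) => (φ : FT B (j+2) → FT B j)) (DT_DT B j)) x
  have he' : (ιT B k) (c x) = e ((DT B (j+1)) x) :=
    congrFun (congrArg (fun (φ : FT B (j+2) →ₗ[R] FT B k) => (φ : FT B (j+2) → FT B k)) he) x
  show (ιT B k) (c x) = (e - g.comp (DT B j)) ((DT B (j+1)) x)
  have hre : (e - g.comp (DT B j)) ((DT B (j+1)) x)
      = e ((DT B (j+1)) x) - g ((DT B j) ((DT B (j+1)) x)) := rfl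
  rw [hre, hdd, map_zero, sub_zero]
  exact he'

end EZsec

section Split
variable {R : Type u} [CommRing R] [IsNoetherianRing R] {B : FGM R}

/-- From concrete vanishing of `Ext^1(K n, K (n+1))`, the inclusion `ιT` splits. -/
theorem split_base {n : ℕ} (h : EZ B n (K B (n + 1))) :
    ∃ e : FT B n →ₗ[R] K B (n + 1), e.comp (ιT B n) = LinearMap.id := by
  obtain ⟨e, he⟩ := h (πT B (n + 1)) (by
    show (πT B (n+1)).comp ((ιT B (n+1)).comp (πT B (n+2))) = 0
    rw [← LinearMap.comp_assoc, πT_ιT, LinearMap.zero_comp])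
  refine ⟨e, LinearMap.ext fun z => ?_⟩
  obtain ⟨y, rfl⟩ := πT_surj B (n + 1) z
  have := lapp he y
  show e ((ιT B n) ((πT B (n+1)) y)) = (πT B (n+1)) y
  exact (this).symm

/-- Propagating retractions up the tower. -/
theorem retract_succ {m : ℕ} (r : FT B m →ₗ[R] K B (m + 1))
    (hr : r.comp (ιT B m) = LinearMap.id) :
    ∃ r' : FT B (m + 1) →ₗ[R] K B (m + 2), r'.comp (ιT B (m + 1)) = LinearMap.id := by
  have hproj : Module.Projective R (K B (m + 1)) :=
    Module.Projective.of_split (ιT B m) r hr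
  obtain ⟨s, hs⟩ := Module.projective_lifting_property (πT B (m + 1)) LinearMap.id
    (πT_surj B (m + 1))
  have hmem : ∀ x, ((LinearMap.id : FT B (m+1) →ₗ[R] FT B (m+1)) - s.comp (πT B (m + 1))) x ∈ LinearMap.ker (πT B (m + 1)) := by
    intro x
    refine LinearMap.mem_ker.mpr ?_
    have : ((LinearMap.id : FT B (m+1) →ₗ[R] FT B (m+1)) - s.comp (πT B (m + 1))) x = x - s ((πT B (m + 1)) x) := rfl
    rw [this, map_sub]
    have h2 : (πT B (m + 1)) (s ((πT B (m + 1)) x)) = (πT B (m + 1)) x := lapp hs _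
    rw [h2, sub_self]
  refine ⟨LinearMap.codRestrict (LinearMap.ker (πT B (m + 1)))
    ((LinearMap.id : FT B (m+1) →ₗ[R] FT B (m+1)) - s.comp (πT B (m + 1))) hmem, LinearMap.ext fun z => Subtype.ext ?_⟩
  show (ιT B (m+1)) z - s ((πT B (m+1)) ((ιT B (m+1)) z)) = (ιT B (m+1)) z
  have h0 : (πT B (m + 1)) ((ιT B (m + 1)) z) = 0 := lapp (πT_ιT B (m + 1)) z
  rw [h0, map_zero, sub_zero]

theorem retract_exists {n : ℕ} (h : EZ B n (K B (n + 1))) :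
    ∀ m, n ≤ m → ∃ r : FT B m →ₗ[R] K B (m + 1), r.comp (ιT B m) = LinearMap.id := by
  intro m hm
  induction m, hm using Nat.le_induction with
  | base => exact split_base h
  | succ m hm ih =>
    obtain ⟨r, hr⟩ := ih
    exact retract_succ r hr

/-- Once the tower splits at stage `j`, all concrete Ext conditions at that stage hold. -/
theorem EZ_of_retract {j : ℕ} (r1 : FT B j →ₗ[R] K B (j + 1))
    (hr1 : r1.comp (ιT B j) = LinearMap.id)
    (N : Type u) [AddCommGroup N] [Module R N] : EZ B j N := by
  intro c hc
  -- c kills the kernel of πT B (j+1)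
  have hker : ∀ x, x ∈ LinearMap.ker (πT B (j + 1)) → c x = 0 := by
    intro x hx
    obtain ⟨y, hy⟩ := πT_surj B (j + 2) ⟨x, hx⟩
    have : (DT B (j + 1)) y = x := by
      show (ιT B (j+1)) ((πT B (j+2)) y) = x
      rw [hy]; rfl
    rw [← this]
    exact lapp hc y
  have hproj : Module.Projective R (K B (j + 1)) :=
    Module.Projective.of_split (ιT B j) r1 hr1
  obtain ⟨s, hs⟩ := Module.projective_lifting_property (πT B (j + 1)) LinearMap.id
    (πT_surj B (j + 1))
  refine ⟨(c.comp s).comp r1, LinearMap.ext fun x => ?_⟩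
  show c x = c (s (r1 ((ιT B j) ((πT B (j+1)) x))))
  have h1 : r1 ((ιT B j) ((πT B (j + 1)) x)) = (πT B (j + 1)) x := lapp hr1 _
  rw [h1]
  have h2 : s ((πT B (j + 1)) x) - x ∈ LinearMap.ker (πT B (j + 1)) := by
    refine LinearMap.mem_ker.mpr ?_
    rw [map_sub]
    have h3 : (πT B (j + 1)) (s ((πT B (j + 1)) x)) = (πT B (j + 1)) x := lapp hs _
    rw [h3, sub_self]
  have h4 := hker _ h2
  rw [map_sub] at h4
  have := sub_eq_zero.mp h4
  rw [this]

end Split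

section ProdRes
variable {R : Type u} [CommRing R]
variable {A A' : Type u} [AddCommGroup A] [Module R A] [AddCommGroup A'] [Module R A']

/-- The concrete Ext-vanishing condition attached to a free resolution. -/
def FreeRes.EZc (r : FreeRes R A) (j : ℕ) (N : Type u) [AddCommGroup N] [Module R N] : Prop :=
  ∀ c : (r.F (j + 1) : Type u) →ₗ[R] N,
    c.comp (r.d (j + 1) : (r.F (j + 2) : Type u) →ₗ[R] (r.F (j + 1) : Type u)) = 0 →
    ∃ e : (r.F j : Type u) →ₗ[R] N, c = e.comp (r.d j).hom

theorem FreeRes.subsingleton_ext_iff' (r : FreeRes R A) (j : ℕ) (N : Type u)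
    [AddCommGroup N] [Module R N] :
    Subsingleton (extM R (j + 1) A N) ↔ r.EZc j N :=
  r.subsingleton_ext_iff j N


variable (R) in
/-- carrier of a resolution term -/
abbrev Fc {A : Type u} [AddCommGroup A] [Module R A] (r : FreeRes R A) (j : ℕ) : Type u := r.F j

/-- Product of two free resolutions. -/
noncomputable def prodRes (rA : FreeRes R A) (rB : FreeRes R A') : FreeRes R (A × A') where
  F j := ModuleCat.of R (Fc R rA j × Fc R rB j)
  proj j := by
    have h1 : Module.Projective R (rA.F j) := rA.proj j
    have h2 : Module.Projective R (rB.F j) := rB.proj j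
    exact inferInstanceAs (Module.Projective R (Fc R rA j × Fc R rB j))
  d j := ModuleCat.ofHom ((rA.d j : Fc R rA (j+1) →ₗ[R] Fc R rA j).prodMap (rB.d j : Fc R rB (j+1) →ₗ[R] Fc R rB j))
  π0 := ModuleCat.ofHom ((rA.π0 : Fc R rA 0 →ₗ[R] A).prodMap (rB.π0 : Fc R rB 0 →ₗ[R] A'))
  surj := by
    rintro ⟨a, b⟩
    obtain ⟨x, hx⟩ := rA.surj a
    obtain ⟨y, hy⟩ := rB.surj b
    exact ⟨(x, y), Prod.ext hx hy⟩
  dd j := by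
    refine ModuleCat.hom_ext (LinearMap.ext fun x => ?_)
    exact Prod.ext (lapp (congrArg ModuleCat.Hom.hom (rA.dd j)) x.1) (lapp (congrArg ModuleCat.Hom.hom (rB.dd j)) x.2)
  πd := by
    refine ModuleCat.hom_ext (LinearMap.ext fun x => ?_)
    exact Prod.ext (lapp (congrArg ModuleCat.Hom.hom rA.πd) x.1) (lapp (congrArg ModuleCat.Hom.hom rB.πd) x.2)
  ex0 := by
    rintro ⟨x, y⟩ hxy
    obtain ⟨x', hx⟩ := rA.ex0 x (congrArg Prod.fst hxy)
    obtain ⟨y', hy⟩ := rB.ex0 y (congrArg Prod.snd hxy)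
    exact ⟨(x', y'), Prod.ext hx hy⟩
  ex j := by
    rintro ⟨x, y⟩ hxy
    obtain ⟨x', hx⟩ := rA.ex j x (congrArg Prod.fst hxy)
    obtain ⟨y', hy⟩ := rB.ex j y (congrArg Prod.snd hxy)
    exact ⟨(x', y'), Prod.ext hx hy⟩

theorem ext_prod_iff (rA : FreeRes R A) (rB : FreeRes R A') (j : ℕ) (N : Type u)
    [AddCommGroup N] [Module R N] :
    Subsingleton (extM R (j + 1) (A × A') N) ↔ (rA.EZc j N ∧ rB.EZc j N) := by
  rw [(prodRes rA rB).subsingleton_ext_iff' j N]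
  have hd : ∀ k, ((prodRes rA rB).d k : Fc R (prodRes rA rB) (k+1) →ₗ[R] Fc R (prodRes rA rB) k)
      = ((rA.d k : Fc R rA (k+1) →ₗ[R] Fc R rA k).prodMap
         (rB.d k : Fc R rB (k+1) →ₗ[R] Fc R rB k)) := fun k => rfl
  constructor
  · intro h
    constructor
    · intro c hc
      obtain ⟨ee, hee⟩ := h (c.comp (LinearMap.fst R (Fc R rA (j+1)) (Fc R rB (j+1)))) (by
        refine LinearMap.ext fun x => ?_
        exact lapp hc x.1)
      refine ⟨ee.comp (LinearMap.inl R (Fc R rA j) (Fc R rB j)), LinearMap.ext fun x => ?_⟩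
      have h1 := lapp hee ((x, 0) : Fc R rA (j+1) × Fc R rB (j+1))
      have h2 : ((prodRes rA rB).d j : Fc R (prodRes rA rB) (j+1) →ₗ[R] Fc R (prodRes rA rB) j)
          ((x, 0) : Fc R rA (j+1) × Fc R rB (j+1))
          = (((rA.d j : Fc R rA (j+1) →ₗ[R] Fc R rA j) x, 0) : Fc R rA j × Fc R rB j) :=
        Prod.ext rfl (map_zero (rB.d j : Fc R rB (j+1) →ₗ[R] Fc R rB j))
      show c x = ee (((rA.d j : Fc R rA (j+1) →ₗ[R] Fc R rA j) x, 0) : Fc R rA j × Fc R rB j)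
      rw [← h2]
      exact h1
    · intro c hc
      obtain ⟨ee, hee⟩ := h (c.comp (LinearMap.snd R (Fc R rA (j+1)) (Fc R rB (j+1)))) (by
        refine LinearMap.ext fun x => ?_
        exact lapp hc x.2)
      refine ⟨ee.comp (LinearMap.inr R (Fc R rA j) (Fc R rB j)), LinearMap.ext fun x => ?_⟩
      have h1 := lapp hee ((0, x) : Fc R rA (j+1) × Fc R rB (j+1))
      have h2 : ((prodRes rA rB).d j : Fc R (prodRes rA rB) (j+1) →ₗ[R] Fc R (prodRes rA rB) j)
          ((0, x) : Fc R rA (j+1) × Fc R rB (j+1))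
          = ((0, (rB.d j : Fc R rB (j+1) →ₗ[R] Fc R rB j) x) : Fc R rA j × Fc R rB j) :=
        Prod.ext (map_zero (rA.d j : Fc R rA (j+1) →ₗ[R] Fc R rA j)) rfl
      show c x = ee ((0, (rB.d j : Fc R rB (j+1) →ₗ[R] Fc R rB j) x) : Fc R rA j × Fc R rB j)
      rw [← h2]
      exact h1
  · rintro ⟨hA, hB⟩ c hc
    obtain ⟨eA, heA⟩ := hA (c.comp (LinearMap.inl R (Fc R rA (j+1)) (Fc R rB (j+1)))) (by
      refine LinearMap.ext fun x => ?_
      have h2 := lapp hc ((x, 0) : Fc R rA (j+2) × Fc R rB (j+2))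
      have h3 : ((prodRes rA rB).d (j+1) : Fc R (prodRes rA rB) (j+2) →ₗ[R] Fc R (prodRes rA rB) (j+1))
          ((x, 0) : Fc R rA (j+2) × Fc R rB (j+2))
          = (((rA.d (j+1) : Fc R rA (j+2) →ₗ[R] Fc R rA (j+1)) x, 0)
              : Fc R rA (j+1) × Fc R rB (j+1)) := Prod.ext rfl (map_zero (rB.d (j+1) : Fc R rB (j+2) →ₗ[R] Fc R rB (j+1)))
      show c (((rA.d (j+1) : Fc R rA (j+2) →ₗ[R] Fc R rA (j+1)) x, 0)
              : Fc R rA (j+1) × Fc R rB (j+1)) = 0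
      rw [← h3]
      exact h2)
    obtain ⟨eB, heB⟩ := hB (c.comp (LinearMap.inr R (Fc R rA (j+1)) (Fc R rB (j+1)))) (by
      refine LinearMap.ext fun x => ?_
      have h2 := lapp hc ((0, x) : Fc R rA (j+2) × Fc R rB (j+2))
      have h3 : ((prodRes rA rB).d (j+1) : Fc R (prodRes rA rB) (j+2) →ₗ[R] Fc R (prodRes rA rB) (j+1))
          ((0, x) : Fc R rA (j+2) × Fc R rB (j+2))
          = ((0, (rB.d (j+1) : Fc R rB (j+2) →ₗ[R] Fc R rB (j+1)) x)
              : Fc R rA (j+1) × Fc R rB (j+1)) := Prod.ext (map_zero (rA.d (j+1) : Fc R rA (j+2) →ₗ[R] Fc R rA (j+1))) rfl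
      show c ((0, (rB.d (j+1) : Fc R rB (j+2) →ₗ[R] Fc R rB (j+1)) x)
              : Fc R rA (j+1) × Fc R rB (j+1)) = 0
      rw [← h3]
      exact h2)
    refine ⟨eA.coprod eB, LinearMap.ext fun x => ?_⟩
    obtain ⟨x₁, x₂⟩ := x
    have hsplit : ((x₁, x₂) : Fc R rA (j+1) × Fc R rB (j+1))
        = ((x₁, 0) : Fc R rA (j+1) × Fc R rB (j+1))
          + ((0, x₂) : Fc R rA (j+1) × Fc R rB (j+1)) := by
      exact Prod.ext (by rw [Prod.fst_add]; exact (add_zero x₁).symm)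
        (by rw [Prod.snd_add]; exact (zero_add x₂).symm)
    rw [hsplit]
    erw [map_add, map_add]
    have e1 : c ((x₁, 0) : Fc R rA (j+1) × Fc R rB (j+1))
        = eA ((rA.d j : Fc R rA (j+1) →ₗ[R] Fc R rA j) x₁) := lapp heA x₁
    have e2 : c ((0, x₂) : Fc R rA (j+1) × Fc R rB (j+1))
        = eB ((rB.d j : Fc R rB (j+1) →ₗ[R] Fc R rB j) x₂) := lapp heB x₂
    rw [e1, e2]
    have f1 : ((prodRes rA rB).d j : Fc R (prodRes rA rB) (j+1) →ₗ[R] Fc R (prodRes rA rB) j)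
        ((x₁, 0) : Fc R rA (j+1) × Fc R rB (j+1))
        = (((rA.d j : Fc R rA (j+1) →ₗ[R] Fc R rA j) x₁, 0) : Fc R rA j × Fc R rB j) :=
      Prod.ext rfl (map_zero (rB.d j : Fc R rB (j+1) →ₗ[R] Fc R rB j))
    have f2 : ((prodRes rA rB).d j : Fc R (prodRes rA rB) (j+1) →ₗ[R] Fc R (prodRes rA rB) j)
        ((0, x₂) : Fc R rA (j+1) × Fc R rB (j+1))
        = ((0, (rB.d j : Fc R rB (j+1) →ₗ[R] Fc R rB j) x₂) : Fc R rA j × Fc R rB j) :=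
      Prod.ext (map_zero (rA.d j : Fc R rA (j+1) →ₗ[R] Fc R rA j)) rfl
    show _ = (eA.coprod eB) (((prodRes rA rB).d j : Fc R (prodRes rA rB) (j+1) →ₗ[R] Fc R (prodRes rA rB) j)
        ((x₁, 0) : Fc R rA (j+1) × Fc R rB (j+1)))
      + (eA.coprod eB) (((prodRes rA rB).d j : Fc R (prodRes rA rB) (j+1) →ₗ[R] Fc R (prodRes rA rB) j)
        ((0, x₂) : Fc R rA (j+1) × Fc R rB (j+1)))
    rw [f1, f2]
    show eA ((rA.d j : Fc R rA (j+1) →ₗ[R] Fc R rA j) x₁)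
        + eB ((rB.d j : Fc R rB (j+1) →ₗ[R] Fc R rB j) x₂)
      = (eA ((rA.d j : Fc R rA (j+1) →ₗ[R] Fc R rA j) x₁) + eB 0)
      + (eA 0 + eB ((rB.d j : Fc R rB (j+1) →ₗ[R] Fc R rB j) x₂))
    rw [map_zero, map_zero, add_zero, zero_add]

end ProdRes


end GarcSacAux

/-- A Noetherian local ring satisfying (SAC) satisfies (GARC). -/
theorem garc_of_sac
    (R : Type u) [CommRing R] [IsNoetherianRing R] [IsLocalRing R]
    (h : SatisfiesSAC R) :
    SatisfiesGARC R := by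
  intro M _ _ hM n hyp
  let B : FGM R := FGM.mk M
  -- the bridge for M itself
  have bridgeM : ∀ (j : ℕ) (N' : Type u) [AddCommGroup N'] [Module R N'],
      Subsingleton (extM R (j + 1) M N') ↔ EZ B j N' := by
    intro j N' _ _
    have h0 := ext_syz_iff B 0 j N'
    rw [Nat.zero_add] at h0
    exact h0
  have h2a : ∀ j, n ≤ j → EZ B j M := fun j hj =>
    ((bridgeM j (M × R)).mp (hyp (j + 1) (by omega))).fst
  have h2R : ∀ j, n ≤ j → EZ B j R := fun j hj =>
    ((bridgeM j (M × R)).mp (hyp (j + 1) (by omega))).snd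
  have h2free : ∀ j, n ≤ j → ∀ b : ℕ, EZ B j (Fin b → R) := fun j hj b =>
    EZ.pi (fun _ => h2R j hj)
  have h3 : ∀ k j, n + k ≤ j → EZ B j (K B k) := by
    intro k
    induction k with
    | zero => intro j hj; exact h2a j (by omega)
    | succ k ih =>
      intro j hj
      obtain ⟨j', rfl⟩ : ∃ j', j = j' + 1 := ⟨j - 1, by omega⟩
      exact EZ_K_succ (h2free (j' + 1) (by omega) _) (ih j' (by omega))
  -- apply SAC to Y = K B n × K B (n+1)
  have towerEZc : ∀ (m j : ℕ) (N' : Type u) [AddCommGroup N'] [Module R N'],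
      (towerRes B m).EZc j N' ↔ EZ B (m + j) N' := fun m j N' _ _ => Iff.rfl
  have bridgeY : ∀ (j : ℕ) (N' : Type u) [AddCommGroup N'] [Module R N'],
      Subsingleton (extM R (j + 1) (K B n × K B (n + 1)) N') ↔
        (EZ B (n + j) N' ∧ EZ B (n + 1 + j) N') := by
    intro j N' _ _
    rw [ext_prod_iff (towerRes B n) (towerRes B (n + 1)) j N',
      towerEZc n j N', towerEZc (n + 1) j N']
  have hExtR : ∀ i > 0, Subsingleton (extM R i (K B n × K B (n + 1)) R) := by
    intro i hi
    obtain ⟨j, rfl⟩ : ∃ j, i = j + 1 := ⟨i - 1, by omega⟩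
    exact (bridgeY j R).mpr ⟨h2R _ (by omega), h2R _ (by omega)⟩
  have hEv : ∃ m : ℕ, ∀ i > m,
      Subsingleton (extM R i (K B n × K B (n + 1)) (K B n × K B (n + 1))) := by
    refine ⟨n + 1, fun i hi => ?_⟩
    obtain ⟨j, rfl⟩ : ∃ j, i = j + 1 := ⟨i - 1, by omega⟩
    refine (bridgeY j _).mpr ⟨EZ.prod ?_ ?_, EZ.prod ?_ ?_⟩
    · exact h3 n (n + j) (by omega)
    · exact h3 (n + 1) (n + j) (by omega)
    · exact h3 n (n + 1 + j) (by omega)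
    · exact h3 (n + 1) (n + 1 + j) (by omega)
  have conc := h (K B n × K B (n + 1)) inferInstance hExtR hEv 1 (by omega)
  have key : EZ B n (K B (n + 1)) := by
    have h5 := (bridgeY 0 _).mp conc
    have h6 := h5.1
    rw [Nat.add_zero] at h6
    exact h6.snd
  have hsplit := retract_exists key
  intro N _ _ i hi
  obtain ⟨j, rfl⟩ : ∃ j, i = j + 1 := ⟨i - 1, by omega⟩
  obtain ⟨r1, hr1⟩ := hsplit j (by omega)
  exact (bridgeM j N).mpr (EZ_of_retract r1 hr1 N)
end
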